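/- For fixed positive integer n ≥ 2, the quantity r_{2s}(n)/n^{(s−1)/2} is a strictly decreasing function of the integer s, provided 2s ≥ n + n/(n^{1/4} − 1). -/

import Mathlib

open Real

/-- `r s n` is the number of representations of `n` as an ordered sum of `s` integer squares. -/
noncomputable def sumOfSquaresRep (s n : ℕ) : ℕ :=
  Set.ncard {x : Fin s → ℤ | ∑ i, x i ^ 2 = (n : ℤ)}

namespace SOSAux

open Finset

noncomputable def sbox (n k : ℕ) : Finset (Fin k → ℤ) := Fintype.piFinset fun _ => Finset.Icc (-(n:ℤ)) n

noncomputable def F (n k : ℕ) : Finset (Fin k → ℤ) := (sbox n k).filter (fun x => ∑ i, x i ^ 2 = (n:ℤ))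

lemma mem_box_of_sum (n : ℕ) {k : ℕ} {x : Fin k → ℤ} (hx : ∑ i, x i ^ 2 = (n:ℤ)) :
    x ∈ sbox n k := by
  rw [sbox, Fintype.mem_piFinset]
  intro i
  have h1 : x i ^ 2 ≤ (n:ℤ) := hx ▸ Finset.single_le_sum (f := fun j => x j ^ 2)
    (fun j _ => sq_nonneg _) (Finset.mem_univ i)
  have h2 : |x i| ≤ x i ^ 2 := by nlinarith [abs_nonneg (x i), sq_abs (x i)]
  rw [Finset.mem_Icc, ← abs_le]
  exact h2.trans h1

lemma rep_eq (n k : ℕ) : sumOfSquaresRep k n = (F n k).card := by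
  rw [sumOfSquaresRep, ← Set.ncard_coe_finset]
  congr 1
  ext x
  simp only [F, Finset.coe_filter, Set.mem_setOf_eq, Finset.mem_coe]
  exact ⟨fun h => ⟨mem_box_of_sum n h, h⟩, And.right⟩

lemma fiber_card (n m : ℕ) (hn : 1 ≤ n) (i j : Fin (m+2)) (hij : i ≠ j) :
    ((F n (m+2)).filter (fun x => x i = 0 ∧ x j = 0)).card = (F n m).card := by
  classical
  set C : Finset (Fin (m+2)) := ({i, j} : Finset (Fin (m+2)))ᶜ with hCdef
  have hCcard : Fintype.card ↥C = m := by
    rw [Fintype.card_coe, hCdef, Finset.card_compl, Finset.card_pair hij]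
    simp
  set e : ↥C ≃ Fin m := Fintype.equivFinOfCardEq hCcard with he
  have hiC : i ∉ C := by simp [hCdef]
  have hjC : j ∉ C := by simp [hCdef]
  have hsum : ∀ x : Fin (m+2) → ℤ, x i = 0 → x j = 0 →
      ∑ k, x k ^ 2 = ∑ b : Fin m, x (e.symm b) ^ 2 := by
    intro x hxi hxj
    have h1 : ∑ b : Fin m, x (e.symm b) ^ 2 = ∑ a : ↥C, x a ^ 2 :=
      e.symm.sum_comp (fun a => x a ^ 2)
    have h2 : ∑ a : ↥C, x (a : Fin (m+2)) ^ 2 = ∑ k ∈ C, x k ^ 2 :=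
      Finset.sum_attach C (fun k => x k ^ 2)
    have h3 : ∑ k ∈ ({i,j} : Finset (Fin (m+2))), x k ^ 2 + ∑ k ∈ C, x k ^ 2 = ∑ k, x k ^ 2 :=
      Finset.sum_add_sum_compl _ _
    rw [Finset.sum_pair hij, hxi, hxj] at h3
    rw [h1, h2]; linarith
  refine Finset.card_bij' (fun x _ => fun b => x (e.symm b))
    (fun y _ => fun k => if h : k ∈ C then y (e ⟨k, h⟩) else 0) ?_ ?_ ?_ ?_
  · intro x hx
    rw [Finset.mem_filter] at hx
    obtain ⟨hxF, hxi, hxj⟩ := hx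
    rw [F, Finset.mem_filter] at hxF ⊢
    constructor
    · simp only [sbox, Fintype.mem_piFinset] at hxF ⊢
      intro b; exact hxF.1 _
    · rw [← hsum x hxi hxj]; exact hxF.2
  · intro y hy
    rw [F, Finset.mem_filter] at hy
    have hxi : (fun k => if h : k ∈ C then y (e ⟨k, h⟩) else 0) i = 0 := by simp [hiC]
    have hxj : (fun k => if h : k ∈ C then y (e ⟨k, h⟩) else 0) j = 0 := by simp [hjC]
    rw [Finset.mem_filter]
    refine ⟨?_, hxi, hxj⟩
    rw [F, Finset.mem_filter]
    constructor
    · simp only [sbox, Fintype.mem_piFinset] at hy ⊢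
      intro k
      by_cases h : k ∈ C
      · simp only [h, dif_pos]; exact hy.1 _
      · simp only [h, dif_neg, not_false_iff]
        simp only [Finset.mem_Icc]
        constructor <;> [linarith [Int.natCast_nonneg n]; exact Int.natCast_nonneg n]
    · rw [hsum _ hxi hxj, hy.2.symm] at *
      congr 1
      funext b
      have hb : ((e.symm b : ↥C) : Fin (m+2)) ∈ C := (e.symm b).2
      simp only [hb, dif_pos, Subtype.coe_eta, Equiv.apply_symm_apply]
  · intro x hx
    rw [Finset.mem_filter] at hx
    obtain ⟨_, hxi, hxj⟩ := hx
    funext k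
    by_cases h : k ∈ C
    · simp only [h, dif_pos, Subtype.coe_eta, Equiv.symm_apply_apply]
    · simp only [h, dif_neg, not_false_iff]
      rw [hCdef, Finset.mem_compl, not_not] at h
      rcases Finset.mem_insert.mp h with h | h
      · rw [h]; exact hxi.symm
      · rw [Finset.mem_singleton.mp h]; exact hxj.symm
  · intro y _
    funext b
    have hb : ((e.symm b : ↥C) : Fin (m+2)) ∈ C := (e.symm b).2
    simp only [hb, dif_pos, Subtype.coe_eta, Equiv.apply_symm_apply]

-- step A : zeros are plentiful
lemma zeros_many (n m : ℕ) (hnm : n ≤ m) {x : Fin (m+2) → ℤ} (hx : x ∈ F n (m+2)) :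
    (m + 2 - n) * (m + 1 - n) ≤
      ((univ : Finset (Fin (m+2))).offDiag.filter (fun p => x p.1 = 0 ∧ x p.2 = 0)).card := by
  classical
  have hxs : ∑ i, x i ^ 2 = (n:ℤ) := (Finset.mem_filter.mp hx).2
  set Z : Finset (Fin (m+2)) := univ.filter (fun i => x i = 0) with hZ
  set NZ : Finset (Fin (m+2)) := univ.filter (fun i => ¬ x i = 0) with hNZ
  have hNZcard : NZ.card ≤ n := by
    have h1 : (NZ.card : ℤ) = ∑ _i ∈ NZ, (1:ℤ) := by simp
    have h2 : ∑ _i ∈ NZ, (1:ℤ) ≤ ∑ i ∈ NZ, x i ^ 2 := by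
      refine Finset.sum_le_sum ?_
      intro i hi
      have hxi : x i ≠ 0 := by simpa [hNZ] using (Finset.mem_filter.mp hi).2
      have h0 : 0 < x i ^ 2 := lt_of_le_of_ne (sq_nonneg _) (Ne.symm (pow_ne_zero 2 hxi))
      omega
    have h3 : ∑ i ∈ NZ, x i ^ 2 ≤ ∑ i, x i ^ 2 :=
      Finset.sum_le_sum_of_subset_of_nonneg (Finset.subset_univ _) (fun i _ _ => sq_nonneg _)
    have : (NZ.card : ℤ) ≤ (n : ℤ) := by rw [h1]; rw [hxs] at h3; linarith
    exact_mod_cast this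
  have hsplit : Z.card + NZ.card = m + 2 := by
    have := Finset.card_filter_add_card_filter_not
      (s := (univ : Finset (Fin (m+2)))) (p := fun i => x i = 0)
    simpa [hZ, hNZ] using this
  have hZcard : m + 2 - n ≤ Z.card := by omega
  have hset : (univ : Finset (Fin (m+2))).offDiag.filter (fun p => x p.1 = 0 ∧ x p.2 = 0)
      = Z.offDiag := by
    ext p
    simp only [Finset.mem_filter, Finset.mem_offDiag, Finset.mem_univ, hZ, true_and]
    tauto
  rw [hset, Finset.offDiag_card]
  have h1 : Z.card * Z.card - Z.card = Z.card * (Z.card - 1) := by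
    cases Z.card with
    | zero => simp
    | succ k => rw [Nat.succ_sub_one, Nat.mul_succ, Nat.add_sub_cancel]
  rw [h1]
  exact Nat.mul_le_mul hZcard (by omega)

-- double counting
lemma count_key (n m : ℕ) (hn : 1 ≤ n) (hnm : n ≤ m) :
    (F n (m+2)).card * ((m + 2 - n) * (m + 1 - n)) ≤ (F n m).card * ((m + 2) * (m + 1)) := by
  classical
  set P := (univ : Finset (Fin (m+2))).offDiag with hP
  have hPcard : P.card = (m + 2) * (m + 1) := by
    rw [hP, Finset.offDiag_card, Finset.card_univ, Fintype.card_fin]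
    ring_nf; omega
  calc (F n (m+2)).card * ((m + 2 - n) * (m + 1 - n))
      = ∑ _x ∈ F n (m+2), (m + 2 - n) * (m + 1 - n) := by rw [Finset.sum_const, smul_eq_mul]
    _ ≤ ∑ x ∈ F n (m+2), (P.filter (fun p => x p.1 = 0 ∧ x p.2 = 0)).card :=
        Finset.sum_le_sum (fun x hx => zeros_many n m hnm hx)
    _ = ∑ p ∈ P, ((F n (m+2)).filter (fun x => x p.1 = 0 ∧ x p.2 = 0)).card := by
        simp only [Finset.card_filter]
        exact Finset.sum_comm
    _ = ∑ _p ∈ P, (F n m).card := by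
        refine Finset.sum_congr rfl ?_
        intro p hp
        have hij : p.1 ≠ p.2 := (Finset.mem_offDiag.mp hp).2.2
        exact fiber_card n m hn p.1 p.2 hij
    _ = (F n m).card * ((m + 2) * (m + 1)) := by
        rw [Finset.sum_const, smul_eq_mul, hPcard, Nat.mul_comm]

-- nonemptiness
lemma F_nonempty (n m : ℕ) (hnm : n ≤ m) : 1 ≤ (F n m).card := by
  classical
  refine Finset.card_pos.mpr ⟨fun k => if (k : ℕ) < n then (1:ℤ) else 0, ?_⟩
  rw [F, Finset.mem_filter]
  have hsum : ∑ i : Fin m, (if (i : ℕ) < n then (1:ℤ) else 0) ^ 2 = (n : ℤ) := by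
    have h1 : ∀ i : Fin m, (if (i : ℕ) < n then (1:ℤ) else 0) ^ 2
        = if (i : ℕ) < n then (1:ℤ) else 0 := by intro i; split <;> norm_num
    simp only [h1, Finset.sum_ite_eq, Finset.sum_boole]
    have : (univ.filter (fun i : Fin m => (i:ℕ) < n)).card = n := by
      have himg : (univ.filter (fun i : Fin m => (i:ℕ) < n)).card
          = ((Finset.range m).filter (fun a => a < n)).card := by
        simp only [Finset.card_filter]
        exact (Fin.sum_univ_eq_sum_range (fun a => if a < n then 1 else 0) m)
      rw [himg]
      have : (Finset.range m).filter (fun a => a < n) = Finset.range n := by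
        ext a; simp; omega
      rw [this, Finset.card_range]
    rw [this]
  refine ⟨?_, hsum⟩
  rw [sbox, Fintype.mem_piFinset]
  intro i
  simp only [Finset.mem_Icc]
  split <;> constructor <;> omega

end SOSAux

open SOSAux in
theorem stmt_8 (n : ℕ) (hn : 2 ≤ n) (s : ℕ)
    (hs : 2 * (s : ℝ) ≥ (n : ℝ) + (n : ℝ) / ((n : ℝ) ^ ((1 : ℝ) / 4) - 1)) :
    (sumOfSquaresRep (2 * (s + 1)) n : ℝ) / (n : ℝ) ^ ((((s : ℝ) + 1) - 1) / 2) <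
      (sumOfSquaresRep (2 * s) n : ℝ) / (n : ℝ) ^ (((s : ℝ) - 1) / 2) := by
  have hn1 : (1:ℝ) < (n:ℝ) := by exact_mod_cast hn
  have hn0 : (0:ℝ) < (n:ℝ) := by linarith
  set q : ℝ := (n : ℝ) ^ ((1:ℝ)/4) with hq
  have hq1 : 1 < q := Real.one_lt_rpow_iff_of_pos hn0 |>.mpr (Or.inl ⟨hn1, by norm_num⟩)
  have hq0 : 0 < q - 1 := by linarith
  have hc0 : 0 < (n:ℝ) / (q - 1) := by positivity
  -- n ≤ 2s
  have hnm : n ≤ 2 * s := by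
    have h : (n:ℝ) ≤ ((2 * s : ℕ) : ℝ) := by push_cast; linarith
    exact_mod_cast h
  set m : ℕ := 2 * s with hm
  -- real versions of m+1-n, m+2-n
  have hkey : ∀ t : ℝ, (m:ℝ) + 1 ≤ t → t < (t - n) * q := by
    intro t ht
    have h1 : (n:ℝ) / (q-1) ≤ (m:ℝ) - n := by push_cast [hm]; linarith
    have h2 : (n:ℝ) / (q-1) < t - n := by push_cast [hm] at ht ⊢; linarith
    have h3 : (n:ℝ) < (t - n) * (q - 1) := by
      rw [div_lt_iff₀ hq0] at h2; linarith
    nlinarith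
  have hA : (m:ℝ) + 1 < ((m:ℝ) + 1 - n) * q := hkey ((m:ℝ)+1) (le_refl _)
  have hB : (m:ℝ) + 2 < ((m:ℝ) + 2 - n) * q := hkey ((m:ℝ)+2) (by linarith)
  have hDn : (0:ℝ) < (m:ℝ) + 1 - n := by
    have := hc0; push_cast [hm]; push_cast [hm] at hs; linarith
  have hDn2 : (0:ℝ) < (m:ℝ) + 2 - n := by linarith
  have hq2 : q * q = (n:ℝ) ^ ((1:ℝ)/2) := by
    rw [hq, ← Real.rpow_add hn0]; norm_num
  -- combine
  have hprod : ((m:ℝ) + 2) * ((m:ℝ) + 1) < (((m:ℝ)+2-n) * ((m:ℝ)+1-n)) * ((n:ℝ)^((1:ℝ)/2)) := by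
    rw [← hq2]
    calc ((m:ℝ) + 2) * ((m:ℝ) + 1) < (((m:ℝ)+2-n)*q) * (((m:ℝ)+1-n)*q) := by
          apply mul_lt_mul' hB.le hA (by linarith) (by positivity)
      _ = (((m:ℝ)+2-n) * ((m:ℝ)+1-n)) * (q*q) := by ring
  -- counting, cast to ℝ
  have hcount := count_key n m (by omega) hnm
  set A : ℕ := (F n (m+2)).card with hA'
  set B : ℕ := (F n m).card with hB'
  have hcast : (A:ℝ) * (((m:ℝ)+2-n) * ((m:ℝ)+1-n)) ≤ (B:ℝ) * (((m:ℝ)+2) * ((m:ℝ)+1)) := by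
    have e1 : ((m + 2 - n : ℕ) : ℝ) = (m:ℝ)+2-n := by
      rw [Nat.cast_sub (by omega)]; push_cast; ring
    have e2 : ((m + 1 - n : ℕ) : ℝ) = (m:ℝ)+1-n := by
      rw [Nat.cast_sub (by omega)]; push_cast; ring
    calc (A:ℝ) * (((m:ℝ)+2-n) * ((m:ℝ)+1-n))
        = ((A * ((m + 2 - n) * (m + 1 - n)) : ℕ) : ℝ) := by push_cast [e1, e2]; ring
      _ ≤ ((B * ((m + 2) * (m + 1)) : ℕ) : ℝ) := by exact_mod_cast hcount
      _ = (B:ℝ) * (((m:ℝ)+2) * ((m:ℝ)+1)) := by push_cast; ring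
  have hB1 : (1:ℝ) ≤ (B:ℝ) := by exact_mod_cast F_nonempty n m hnm
  have hmain : (A:ℝ) < (B:ℝ) * (n:ℝ)^((1:ℝ)/2) := by
    have h2 : (B:ℝ) * (((m:ℝ)+2) * ((m:ℝ)+1))
        < (B:ℝ) * ((((m:ℝ)+2-n) * ((m:ℝ)+1-n)) * ((n:ℝ)^((1:ℝ)/2))) := by
      apply mul_lt_mul_of_pos_left hprod (by linarith)
    have h3 : (A:ℝ) * (((m:ℝ)+2-n) * ((m:ℝ)+1-n))
        < ((B:ℝ) * (n:ℝ)^((1:ℝ)/2)) * (((m:ℝ)+2-n) * ((m:ℝ)+1-n)) := by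
      calc (A:ℝ) * _ ≤ _ := hcast
        _ < _ := h2
        _ = ((B:ℝ) * (n:ℝ)^((1:ℝ)/2)) * (((m:ℝ)+2-n) * ((m:ℝ)+1-n)) := by ring
    exact lt_of_mul_lt_mul_right h3 (by positivity)
  -- final rearrangement
  have hrep1 : sumOfSquaresRep (2 * (s+1)) n = A := by
    rw [hA']; have : 2 * (s+1) = m + 2 := by omega
    rw [this, rep_eq]
  have hrep2 : sumOfSquaresRep (2 * s) n = B := by rw [hB', ← hm, rep_eq]
  rw [hrep1, hrep2]
  have hexp : (((s:ℝ) + 1) - 1) / 2 = ((s:ℝ) - 1)/2 + (1:ℝ)/2 := by ring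
  rw [hexp, Real.rpow_add hn0]
  set X : ℝ := (n:ℝ) ^ (((s:ℝ)-1)/2) with hX
  have hX0 : 0 < X := Real.rpow_pos_of_pos hn0 _
  have hY0 : 0 < (n:ℝ)^((1:ℝ)/2) := Real.rpow_pos_of_pos hn0 _
  rw [div_lt_div_iff₀ (by positivity) hX0]
  calc (A:ℝ) * X < ((B:ℝ) * (n:ℝ)^((1:ℝ)/2)) * X := by
        apply mul_lt_mul_of_pos_right hmain hX0
    _ = (B:ℝ) * (X * (n:ℝ)^((1:ℝ)/2)) := by ring
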